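/- Let n be a natural number. In the group M* of units of the monoid (M_n(ℤ), *): the set M_0 of matrices with zero diagonal is a normal subgroup of M* isomorphic to ℤ^{n(n−1)} (with * restricted to M_0 being matrix addition), the set M_d* = M* ∩ M_d of diagonal units is a subgroup isomorphic to C_2^n, every element of M* factors as 𝔞 = 𝔞_0 * 𝔞_d with 𝔞_0 ∈ M_0 and 𝔞_d ∈ M_d*, and M_0 ∩ M_d* is trivial; that is, M* is the internal semidirect product of M_0 by M_d*. -/

import Mathlib

/-- A type synonym for `M = M_n(ℤ)`, carrying the monoid structure given by
`𝔞 * 𝔟 = [c_ij]` with `c_ij = a_ij + (1 + 2 a_jj) b_ij`. -/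
def MM (n : ℕ) : Type := Matrix (Fin n) (Fin n) ℤ

instance (n : ℕ) : Mul (MM n) :=
  ⟨fun 𝔞 𝔟 i j => 𝔞 i j + (1 + 2 * 𝔞 j j) * 𝔟 i j⟩

instance (n : ℕ) : One (MM n) := ⟨fun _ _ => (0 : ℤ)⟩

theorem MM.mul_apply {n : ℕ} (𝔞 𝔟 : MM n) (i j : Fin n) :
    (𝔞 * 𝔟) i j = 𝔞 i j + (1 + 2 * 𝔞 j j) * 𝔟 i j := rfl

theorem MM.one_apply {n : ℕ} (i j : Fin n) : (1 : MM n) i j = 0 := rfl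

theorem MM.ext {n : ℕ} {𝔞 𝔟 : MM n} (h : ∀ i j, 𝔞 i j = 𝔟 i j) : 𝔞 = 𝔟 :=
  funext fun i => funext fun j => h i j

instance (n : ℕ) : Monoid (MM n) where
  mul_assoc a b c := MM.ext fun i j => by
    simp only [MM.mul_apply]; ring
  one_mul a := MM.ext fun i j => by simp only [MM.mul_apply, MM.one_apply]; ring
  mul_one a := MM.ext fun i j => by simp only [MM.mul_apply, MM.one_apply]; ring

namespace MMaux

variable {n : ℕ}

theorem eps_mul (u v : MM n) (j : Fin n) :
    1 + 2 * (u * v) j j = (1 + 2 * u j j) * (1 + 2 * v j j) := by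
  simp only [MM.mul_apply]; ring

theorem unit_rel (u : (MM n)ˣ) (i j : Fin n) :
    ((u⁻¹ : (MM n)ˣ) : MM n) i j
      + (1 + 2 * ((u⁻¹ : (MM n)ˣ) : MM n) j j) * (u : MM n) i j = 0 := by
  have h : ((u⁻¹ : (MM n)ˣ) : MM n) * (u : MM n) = 1 := u.inv_mul
  have := congrFun (congrFun h i) j
  simpa [MM.mul_apply, MM.one_apply] using this

theorem unit_diag (u : (MM n)ˣ) (i : Fin n) :
    (u : MM n) i i = 0 ∨ (u : MM n) i i = -1 := by
  have h : ((u⁻¹ : (MM n)ˣ) : MM n) * (u : MM n) = 1 := u.inv_mul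
  have h2 : (1 + 2 * ((u⁻¹ : (MM n)ˣ) : MM n) i i) * (1 + 2 * (u : MM n) i i) = 1 := by
    rw [← eps_mul, h, MM.one_apply]; ring
  have hu : IsUnit (1 + 2 * (u : MM n) i i) :=
    IsUnit.of_mul_eq_one _ ((mul_comm _ _).trans h2)
  rcases Int.isUnit_iff.mp hu with h | h <;> omega


theorem eps_inv_diag (u : (MM n)ˣ) (i : Fin n) :
    (1 + 2 * ((u⁻¹ : (MM n)ˣ) : MM n) i i) * (1 + 2 * (u : MM n) i i) = 1 := by
  rw [← eps_mul, u.inv_mul, MM.one_apply]; ring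

def H0 (n : ℕ) : Subgroup (MM n)ˣ where
  carrier := {u | ∀ i, (u : MM n) i i = 0}
  one_mem' := fun _ => rfl
  mul_mem' := by
    intro a b ha hb i
    show ((a : MM n) * (b : MM n)) i i = 0
    rw [MM.mul_apply, ha i, hb i]; ring
  inv_mem' := by
    intro a ha i
    have h := eps_inv_diag a i
    rw [ha i] at h
    omega

def Hd (n : ℕ) : Subgroup (MM n)ˣ where
  carrier := {u | ∀ i j, i ≠ j → (u : MM n) i j = 0}
  one_mem' := fun _ _ _ => rfl
  mul_mem' := by
    intro a b ha hb i j hij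
    show ((a : MM n) * (b : MM n)) i j = 0
    rw [MM.mul_apply, ha i j hij, hb i j hij]; ring
  inv_mem' := by
    intro a ha i j hij
    have h := unit_rel a i j
    rw [ha i j hij] at h
    simpa using h

theorem h0_normal (n : ℕ) : (H0 n).Normal := by
  constructor
  intro u hu g i
  have hgg : (1 + 2 * (g : MM n) i i) * (1 + 2 * ((g⁻¹ : (MM n)ˣ) : MM n) i i) = 1 := by
    rw [← eps_mul, g.mul_inv, MM.one_apply]; ring
  have key : 1 + 2 * ((g * u * g⁻¹ : (MM n)ˣ) : MM n) i i = 1 := by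
    have e1 : ((g * u * g⁻¹ : (MM n)ˣ) : MM n)
        = ((g : MM n) * (u : MM n)) * ((g⁻¹ : (MM n)ˣ) : MM n) := rfl
    rw [e1, eps_mul, eps_mul, hu i]
    linear_combination hgg
  omega

theorem h0_add (n : ℕ) (u v : (MM n)ˣ) (hu : u ∈ H0 n) (hv : v ∈ H0 n) (i j : Fin n) :
    ((u * v : (MM n)ˣ) : MM n) i j = (u : MM n) i j + (v : MM n) i j := by
  show ((u : MM n) * (v : MM n)) i j = _
  rw [MM.mul_apply, hu j]; ring

def mkUnit0 (a : MM n) (ha : ∀ i, a i i = 0) : (MM n)ˣ where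
  val := a
  inv := fun i j => - a i j
  val_inv := MM.ext fun i j => by
    show a i j + (1 + 2 * a j j) * (-(a i j)) = 0
    rw [ha j]; ring
  inv_val := MM.ext fun i j => by
    show (-(a i j)) + (1 + 2 * (-(a j j))) * a i j = 0
    rw [ha j]; ring

def mkUnitD (d : MM n) (hoff : ∀ i j, i ≠ j → d i j = 0)
    (hdiag : ∀ i, d i i = 0 ∨ d i i = -1) : (MM n)ˣ where
  val := d
  inv := d
  val_inv := MM.ext fun i j => by
    show d i j + (1 + 2 * d j j) * d i j = (0 : ℤ)
    by_cases h : i = j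
    · subst h; rcases hdiag i with h | h <;> rw [h] <;> ring
    · rw [hoff i j h]; ring
  inv_val := MM.ext fun i j => by
    show d i j + (1 + 2 * d j j) * d i j = (0 : ℤ)
    by_cases h : i = j
    · subst h; rcases hdiag i with h | h <;> rw [h] <;> ring
    · rw [hoff i j h]; ring


abbrev OffDiag (n : ℕ) := {p : Fin n × Fin n // p.1 ≠ p.2}

def e0 (n : ℕ) : H0 n ≃* Multiplicative (OffDiag n → ℤ) where
  toFun u := Multiplicative.ofAdd fun p => ((u : (MM n)ˣ) : MM n) p.1.1 p.1.2
  invFun f := ⟨mkUnit0 (fun i j => if h : i = j then 0 else f.toAdd ⟨(i, j), h⟩)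
      (fun i => dif_pos rfl), fun i => dif_pos rfl⟩
  left_inv := by
    intro u
    apply Subtype.ext
    apply Units.ext
    apply MM.ext
    intro i j
    by_cases h : i = j
    · subst h
      show (if h : i = i then (0:ℤ) else _) = _
      rw [dif_pos rfl, u.2 i]
    · show (if hh : i = j then (0:ℤ) else ((u : (MM n)ˣ) : MM n) i j) = _
      rw [dif_neg h]
  right_inv := by
    intro f
    funext p
    show (if h : p.1.1 = p.1.2 then (0:ℤ) else f.toAdd ⟨(p.1.1, p.1.2), h⟩) = f p
    rw [dif_neg p.2]
    rfl
  map_mul' := by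
    intro u v
    funext p
    show ((u * v : (MM n)ˣ) : MM n) p.1.1 p.1.2
        = ((u : (MM n)ˣ) : MM n) p.1.1 p.1.2 + ((v : (MM n)ˣ) : MM n) p.1.1 p.1.2
    exact h0_add n u v u.2 v.2 p.1.1 p.1.2

def diagEquiv (n : ℕ) : {p : Fin n × Fin n // p.1 = p.2} ≃ Fin n where
  toFun p := p.1.1
  invFun i := ⟨(i, i), rfl⟩
  left_inv := by rintro ⟨⟨a, b⟩, h⟩; cases h; rfl
  right_inv := fun i => rfl

theorem card_offDiag (n : ℕ) : Fintype.card (OffDiag n) = n * (n - 1) := by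
  have h1 : Fintype.card (OffDiag n) = n * n - n := by
    rw [Fintype.card_subtype_compl, Fintype.card_congr (diagEquiv n)]
    simp
  rw [h1]
  cases n with
  | zero => rfl
  | succ k =>
    simp only [Nat.succ_sub_one]
    exact Nat.sub_eq_of_eq_add (by ring)

noncomputable def e0' (n : ℕ) : H0 n ≃* Multiplicative (Fin (n * (n - 1)) → ℤ) :=
  (e0 n).trans (AddEquiv.toMultiplicative
    ((RingEquiv.piCongrLeft' (fun _ => ℤ)
      (Fintype.equivFinOfCardEq (card_offDiag n))).toAddEquiv))

def dOf {n : ℕ} (f : Fin n → Multiplicative (ZMod 2)) : MM n :=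
  fun i j => if i = j then (if (f i).toAdd = 1 then -1 else 0) else 0

theorem dOf_diag {n : ℕ} (f : Fin n → Multiplicative (ZMod 2)) (i : Fin n) :
    dOf f i i = if (f i).toAdd = 1 then -1 else 0 := if_pos rfl

theorem dOf_off {n : ℕ} (f : Fin n → Multiplicative (ZMod 2)) {i j : Fin n} (h : i ≠ j) :
    dOf f i j = 0 := if_neg h

def ed (n : ℕ) : Hd n ≃* (Fin n → Multiplicative (ZMod 2)) where
  toFun u := fun i => Multiplicative.ofAdd ((((u : (MM n)ˣ) : MM n) i i : ℤ) : ZMod 2)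
  invFun f := ⟨mkUnitD (dOf f) (fun _ _ h => dOf_off f h)
      (fun i => by rw [dOf_diag]; split <;> simp),
    fun i j h => dOf_off f h⟩
  left_inv := by
    intro u
    apply Subtype.ext
    apply Units.ext
    apply MM.ext
    intro i j
    by_cases h : i = j
    · subst h
      show dOf (fun k => Multiplicative.ofAdd ((((u : (MM n)ˣ) : MM n) k k : ℤ) : ZMod 2)) i i = ((u : (MM n)ˣ) : MM n) i i
      rw [dOf_diag]
      rcases unit_diag (u : (MM n)ˣ) i with h | h <;> rw [h]
      · rw [if_neg]
        simp only [Int.cast_zero, toAdd_ofAdd]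
        exact fun hc => one_ne_zero hc.symm
      · rw [if_pos]
        simp only [toAdd_ofAdd]
        decide
    · show dOf (fun k => Multiplicative.ofAdd ((((u : (MM n)ˣ) : MM n) k k : ℤ) : ZMod 2)) i j = ((u : (MM n)ˣ) : MM n) i j
      rw [dOf_off _ h, u.2 i j h]
  right_inv := by
    intro f
    funext i
    show Multiplicative.ofAdd ((dOf f i i : ℤ) : ZMod 2) = f i
    rw [dOf_diag]
    apply Multiplicative.toAdd.injective
    by_cases hx : (f i).toAdd = 1
    · rw [if_pos hx, hx]
      decide
    · rw [if_neg hx]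
      have : (f i).toAdd = 0 := by
        have : ∀ x : ZMod 2, x ≠ 1 → x = 0 := by decide
        exact this _ hx
      rw [this]
      simp
  map_mul' := by
    intro u v
    funext i
    apply Multiplicative.toAdd.injective
    show ((((u * v : (MM n)ˣ) : MM n) i i : ℤ) : ZMod 2)
      = Multiplicative.toAdd
          ((Multiplicative.ofAdd ((((u : (MM n)ˣ) : MM n) i i : ℤ) : ZMod 2))
            * (Multiplicative.ofAdd ((((v : (MM n)ˣ) : MM n) i i : ℤ) : ZMod 2)))
    rw [toAdd_mul, toAdd_ofAdd, toAdd_ofAdd]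
    have e1 : ((u * v : (MM n)ˣ) : MM n) i i
        = ((u : (MM n)ˣ) : MM n) i i
          + (1 + 2 * ((u : (MM n)ˣ) : MM n) i i) * ((v : (MM n)ˣ) : MM n) i i := rfl
    rw [e1]
    push_cast
    have h2 : (2 : ZMod 2) = 0 := rfl
    linear_combination ((((u : (MM n)ˣ) : MM n) i i : ZMod 2) * (((v : (MM n)ˣ) : MM n) i i : ZMod 2)) * h2

theorem factor (n : ℕ) (u : (MM n)ˣ) : ∃ a ∈ H0 n, ∃ d ∈ Hd n, u = a * d := by
  set dm : MM n := fun i j => if i = j then (u : MM n) i i else 0 with hdm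
  have hoff : ∀ i j, i ≠ j → dm i j = 0 := fun i j h => if_neg h
  have hdd : ∀ i, dm i i = (u : MM n) i i := fun i => if_pos rfl
  have hdiag : ∀ i, dm i i = 0 ∨ dm i i = -1 := fun i => by
    rw [hdd]; exact unit_diag u i
  set D : (MM n)ˣ := mkUnitD dm hoff hdiag with hD
  have hDmem : D ∈ Hd n := fun i j h => hoff i j h
  have hDD : D * D = 1 := by
    apply Units.ext
    show dm * dm = 1
    exact (mkUnitD dm hoff hdiag).val_inv
  have ha : u * D ∈ H0 n := by
    intro i
    show ((u : MM n) * dm) i i = 0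
    rw [MM.mul_apply, hdd]
    rcases unit_diag u i with h | h <;> rw [h] <;> ring
  refine ⟨u * D, ha, D, hDmem, ?_⟩
  rw [mul_assoc, hDD, mul_one]

theorem inf_bot (n : ℕ) : H0 n ⊓ Hd n = ⊥ := by
  rw [eq_bot_iff]
  rintro u ⟨h0, hd⟩
  rw [Subgroup.mem_bot]
  apply Units.ext
  apply MM.ext
  intro i j
  rw [show ((1 : (MM n)ˣ) : MM n) i j = 0 from rfl]
  by_cases h : i = j
  · subst h; exact h0 i
  · exact hd i j h

end MMaux

/-- in the group of units `M*` of `(M_n(ℤ), *)`, the matrices with zero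
diagonal form a normal subgroup `M_0 ≅ ℤ^{n(n-1)}` (on which `*` is matrix addition),
the diagonal units form a subgroup `M_d* ≅ C_2^n`, every unit factors as `𝔞_0 * 𝔞_d`,
and `M_0 ∩ M_d*` is trivial; i.e. `M*` is the internal semidirect product of `M_0`
by `M_d*`. -/
theorem stmt5 (n : ℕ) :
    ∃ H0 Hd : Subgroup (MM n)ˣ,
      (∀ u : (MM n)ˣ, u ∈ H0 ↔ ∀ i, (u : MM n) i i = 0) ∧
      (∀ u : (MM n)ˣ, u ∈ Hd ↔ ∀ i j, i ≠ j → (u : MM n) i j = 0) ∧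
      H0.Normal ∧
      (∀ u v : (MM n)ˣ, u ∈ H0 → v ∈ H0 →
        ∀ i j, ((u * v : (MM n)ˣ) : MM n) i j = (u : MM n) i j + (v : MM n) i j) ∧
      Nonempty (H0 ≃* Multiplicative (Fin (n * (n - 1)) → ℤ)) ∧
      Nonempty (Hd ≃* (Fin n → Multiplicative (ZMod 2))) ∧
      (∀ u : (MM n)ˣ, ∃ a ∈ H0, ∃ d ∈ Hd, u = a * d) ∧
      H0 ⊓ Hd = ⊥ := by
  exact ⟨MMaux.H0 n, MMaux.Hd n, fun _ => Iff.rfl, fun _ => Iff.rfl, MMaux.h0_normal n,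
    MMaux.h0_add n, ⟨MMaux.e0' n⟩, ⟨MMaux.ed n⟩, MMaux.factor n, MMaux.inf_bot n⟩
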